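/- Let ξ_n be the reflected Gray code bijection and let N_j = {1,...,j}. Then for n ≥ 2, the sum over all initial segments satisfies Σ_{j=1}^{2^n − 1} θ(n, ξ_n^{-1}(N_j)) = 2^{2n−1} − 2^{n−1}. -/
import Mathlib


open Finset

/-- Number of coordinates in which two 0-1 vectors differ. -/
def diffCount {n : ℕ} (u v : Fin n → Bool) : ℕ :=
  (Finset.univ.filter fun i => u i ≠ v i).card

/-- Adjacency in the hypercube `Q_n`: differ in exactly one coordinate. -/
def cubeAdj {n : ℕ} (u v : Fin n → Bool) : Prop := diffCount u v = 1

instance {n : ℕ} (u v : Fin n → Bool) : Decidable (cubeAdj u v) :=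
  inferInstanceAs (Decidable (diffCount u v = 1))

/-- `theta n S`: number of edges of `Q_n` with exactly one endpoint in `S`. -/
def theta (n : ℕ) (S : Finset (Fin n → Bool)) : ℕ :=
  ((Finset.univ ×ˢ Finset.univ).filter fun p : (Fin n → Bool) × (Fin n → Bool) =>
    p.1 ∈ S ∧ p.2 ∉ S ∧ cubeAdj p.1 p.2).card

/-- The reflected Gray code map `ξ_n : {0,1}^n → {1,...,2^n}`. -/
def gray : (n : ℕ) → (Fin n → Bool) → ℕ
  | 0, _ => 1
  | n + 1, v =>
    if v 0 = false then gray n (fun i => v i.succ)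
    else 2 ^ (n + 1) + 1 - gray n (fun i => v i.succ)

/-- Wirelength of an embedding `f` of `Q_n` into a host with distance `d`. -/
def wirelength {n : ℕ} {α : Type*} (d : α → α → ℕ) (f : (Fin n → Bool) → α) : ℕ :=
  (∑ u : Fin n → Bool, ∑ v : Fin n → Bool, if cubeAdj u v then d (f u) (f v) else 0) / 2

/-- Cyclic distance on the cycle with `m` vertices labeled `1,...,m`. -/
def cycDist (m a b : ℕ) : ℕ := min (Nat.dist a b) (m - Nat.dist a b)

/-- The 2-order Gray code map. -/
def gray2 (n₁ n₂ : ℕ) (v : Fin (n₁ + n₂) → Bool) : ℕ × ℕ :=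
  (gray n₁ fun i => v (Fin.castAdd n₂ i), gray n₂ fun i => v (Fin.natAdd n₁ i))

lemma diffCount_eq_sum {n} (u v : Fin n → Bool) :
    diffCount u v = ∑ i, if u i ≠ v i then 1 else 0 := by
  simp [diffCount, Finset.card_filter]

lemma diffCount_cons {n} (a b : Bool) (u v : Fin n → Bool) :
    diffCount (Fin.cons a u) (Fin.cons b v) =
      (if a ≠ b then 1 else 0) + diffCount u v := by
  simp [diffCount_eq_sum, Fin.sum_univ_succ]

lemma diffCount_eq_zero {n} (u v : Fin n → Bool) : diffCount u v = 0 ↔ u = v := by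
  simp [diffCount, Finset.filter_eq_empty_iff, Finset.card_eq_zero, funext_iff]

lemma cubeAdj_cons {n} (a b : Bool) (u v : Fin n → Bool) :
    cubeAdj (Fin.cons a u) (Fin.cons b v) ↔
      (a = b ∧ cubeAdj u v) ∨ (a ≠ b ∧ u = v) := by
  rw [cubeAdj, diffCount_cons]
  by_cases h : a = b <;> simp [h, cubeAdj, ← diffCount_eq_zero u v]

lemma gray_cons {n} (a : Bool) (u : Fin n → Bool) :
    gray (n+1) (Fin.cons a u) =
      if a = false then gray n u else 2 ^ (n+1) + 1 - gray n u := by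
  simp [gray]

lemma gray_mem {n} (v : Fin n → Bool) : 1 ≤ gray n v ∧ gray n v ≤ 2 ^ n := by
  induction n with
  | zero => simp [gray]
  | succ n ih =>
    rw [← Fin.cons_self_tail v, gray_cons]
    have := ih (Fin.tail v)
    have h2 : (2:ℕ)^n ≤ 2^(n+1) := by
      rw [pow_succ]; omega
    split <;> omega

lemma sum_cons_split {n} {M : Type*} [AddCommMonoid M] (f : (Fin (n+1) → Bool) → M) :
    ∑ v, f v = ∑ a : Bool, ∑ u : Fin n → Bool, f (Fin.cons a u) := by
  have : ∑ v, f v = ∑ p : Bool × (Fin n → Bool), f (Fin.cons p.1 p.2) :=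
    (Fintype.sum_equiv (Fin.consEquiv fun _ => Bool) _ _ fun p => rfl).symm
  rw [this, Fintype.sum_prod_type]

lemma gray_inj {n} : Function.Injective (gray n) := by
  induction n with
  | zero => intro u v _; funext i; exact absurd i.2 (by omega)
  | succ n ih =>
    intro u v h
    rw [← Fin.cons_self_tail u, ← Fin.cons_self_tail v] at h ⊢
    rw [gray_cons, gray_cons] at h
    have h1 := gray_mem (Fin.tail u)
    have h2 := gray_mem (Fin.tail v)
    have hp : (2:ℕ)^n ≤ 2^(n+1) := by rw [pow_succ]; omega
    by_cases ha : u 0 = false <;> by_cases hb : v 0 = false <;>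
      simp [ha, hb] at h ⊢
    · exact ih h
    · omega
    · omega
    · exact ih (by omega)

lemma gray_image {n} : Finset.image (gray n) Finset.univ = Finset.Icc 1 (2^n) := by
  apply Finset.eq_of_subset_of_card_le
  · intro x hx
    simp only [Finset.mem_image] at hx
    obtain ⟨v, _, rfl⟩ := hx
    have := gray_mem v
    simp [Finset.mem_Icc]; omega
  · rw [Finset.card_image_of_injective _ gray_inj]
    simp [Nat.card_Icc]

lemma sum_gray {n} : 2 * ∑ v : Fin n → Bool, gray n v = 2^n * (2^n + 1) := by
  have h1 : ∑ v : Fin n → Bool, gray n v = ∑ k ∈ Finset.Icc 1 (2^n), k := by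
    rw [← gray_image, Finset.sum_image (fun a _ b _ h => gray_inj h)]
  have h2 : Finset.range (2^n + 1) = insert 0 (Finset.Icc 1 (2^n)) := by
    ext x; simp only [Finset.mem_range, Finset.mem_insert, Finset.mem_Icc]
    have : 1 ≤ 2^n := Nat.one_le_two_pow
    omega
  have h3 := Finset.sum_range_id_mul_two (2^n + 1)
  rw [h2, Finset.sum_insert (by simp)] at h3
  simp only [Nat.add_sub_cancel, zero_add] at h3
  rw [h1, mul_comm (2^n)]
  omega

lemma nat_dist_eq (a b : ℕ) : Nat.dist a b = a - b + (b - a) := rfl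

lemma cubeAdj_symm {n} (u v : Fin n → Bool) : cubeAdj u v ↔ cubeAdj v u := by
  unfold cubeAdj diffCount
  rw [show (Finset.univ.filter fun i => u i ≠ v i) = (Finset.univ.filter fun i => v i ≠ u i) by
    apply Finset.filter_congr; intro i _; simp [ne_comm]]

lemma double_cons_split {n} (g : (Fin (n+1) → Bool) → (Fin (n+1) → Bool) → ℕ) :
    ∑ u, ∑ v, g u v
    = ∑ a : Bool, ∑ b : Bool, ∑ u : Fin n → Bool, ∑ v : Fin n → Bool,
        g (Fin.cons a u) (Fin.cons b v) := by
  rw [sum_cons_split (M := ℕ) (fun u => ∑ v, g u v)]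
  refine Finset.sum_congr rfl fun a _ => ?_
  calc ∑ u : Fin n → Bool, ∑ v, g (Fin.cons a u) v
      = ∑ u : Fin n → Bool, ∑ b : Bool, ∑ v : Fin n → Bool,
          g (Fin.cons a u) (Fin.cons b v) :=
        Finset.sum_congr rfl fun u _ => sum_cons_split _
    _ = _ := Finset.sum_comm

lemma sum_dist (n : ℕ) :
    (∑ u : Fin n → Bool, ∑ v : Fin n → Bool,
      if cubeAdj u v then Nat.dist (gray n u) (gray n v) else 0) + 2^n = 4^n := by
  induction n with
  | zero => simp [cubeAdj, diffCount]
  | succ n ih =>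
    set T := ∑ u : Fin n → Bool, ∑ v : Fin n → Bool,
      if cubeAdj u v then Nat.dist (gray n u) (gray n v) else 0 with hT
    set S := ∑ u : Fin n → Bool, (2^(n+1) + 1 - 2 * gray n u) with hSdef
    -- the mixed (a ≠ b) contribution
    have hmix : ∀ a b : Bool, a ≠ b →
        (∑ u : Fin n → Bool, ∑ v : Fin n → Bool,
          if cubeAdj (Fin.cons a u) (Fin.cons b v) then
            Nat.dist (gray (n+1) (Fin.cons a u)) (gray (n+1) (Fin.cons b v)) else 0) = S := by
      intro a b hab
      refine Finset.sum_congr rfl fun u _ => ?_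
      have : ∀ v : Fin n → Bool, (if cubeAdj (Fin.cons a u) (Fin.cons b v) then
            Nat.dist (gray (n+1) (Fin.cons a u)) (gray (n+1) (Fin.cons b v)) else 0)
          = if u = v then Nat.dist (gray (n+1) (Fin.cons a u)) (gray (n+1) (Fin.cons b v)) else 0 := by
        intro v
        congr 1
        simp [cubeAdj_cons, hab, eq_iff_iff]
      simp only [this, Finset.sum_ite_eq, Finset.mem_univ, if_true]
      have hb := gray_mem u
      have hp : (2:ℕ)^(n+1) = 2*2^n := by rw [pow_succ]; omega
      cases a <;> cases b
      · exact absurd rfl hab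
      · rw [gray_cons, gray_cons, if_pos rfl, if_neg (by decide), nat_dist_eq]; omega
      · rw [gray_cons, gray_cons, if_neg (by decide), if_pos rfl, nat_dist_eq]; omega
      · exact absurd rfl hab
    have hsame : ∀ a : Bool,
        (∑ u : Fin n → Bool, ∑ v : Fin n → Bool,
          if cubeAdj (Fin.cons a u) (Fin.cons a v) then
            Nat.dist (gray (n+1) (Fin.cons a u)) (gray (n+1) (Fin.cons a v)) else 0) = T := by
      intro a
      refine Finset.sum_congr rfl fun u _ => Finset.sum_congr rfl fun v _ => ?_
      have h1 := gray_mem u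
      have h2 := gray_mem v
      have hp : (2:ℕ)^(n+1) = 2*2^n := by rw [pow_succ]; omega
      have hcond : cubeAdj (Fin.cons a u) (Fin.cons a v) ↔ cubeAdj u v := by
        simp [cubeAdj_cons]
      rw [if_congr hcond rfl rfl]
      by_cases h : cubeAdj u v
      · rw [if_pos h, if_pos h]
        cases a
        · rw [gray_cons, gray_cons, if_pos rfl, if_pos rfl]
        · rw [gray_cons, gray_cons, if_neg (by decide), if_neg (by decide),
            nat_dist_eq, nat_dist_eq]
          omega
      · rw [if_neg h, if_neg h]
    have hS2 : S + 2^n * (2^n + 1) = 2^n * (2^(n+1) + 1) := by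
      have hg := sum_gray (n := n)
      have hp : (2:ℕ)^(n+1) = 2*2^n := by rw [pow_succ]; omega
      calc S + 2^n*(2^n+1) = S + 2 * ∑ v : Fin n → Bool, gray n v := by rw [hg]
        _ = ∑ u : Fin n → Bool, ((2^(n+1)+1 - 2*gray n u) + 2*gray n u) := by
            rw [hSdef, Finset.mul_sum, ← Finset.sum_add_distrib]
        _ = ∑ _u : Fin n → Bool, (2^(n+1)+1) := by
            refine Finset.sum_congr rfl fun u _ => ?_
            have := gray_mem u; omega
        _ = 2^n * (2^(n+1)+1) := by
            simp [Finset.sum_const, Finset.card_univ, mul_comm]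
    rw [double_cons_split (fun u v => if cubeAdj u v then
      Nat.dist (gray (n+1) u) (gray (n+1) v) else 0)]
    simp only [Fintype.sum_bool]
    rw [hsame true, hsame false, hmix true false (by simp), hmix false true (by simp)]
    have e1 : (4:ℕ)^(n+1) = 4^n * 4 := pow_succ 4 n
    have e2 : (2:ℕ)^(n+1) = 2^n * 2 := pow_succ 2 n
    have e3 : 2^n * (2^(n+1)+1) = 2^n*(2^n+1) + 2^n * 2^n := by rw [e2]; ring
    have e4 : (4:ℕ)^n = 2^n * 2^n := by
      rw [show (4:ℕ) = 2*2 from rfl, mul_pow]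
    omega

theorem stmt4 (n : ℕ) (hn : 2 ≤ n) :
    ∑ j ∈ Finset.Icc 1 (2 ^ n - 1),
        theta n (Finset.univ.filter fun v => gray n v ∈ Finset.Icc 1 j) =
      2 ^ (2 * n - 1) - 2 ^ (n - 1) := by
  have hp1 : (1:ℕ) ≤ 2^n := Nat.one_le_two_pow
  have htheta : ∀ j : ℕ,
      theta n (Finset.univ.filter fun v => gray n v ∈ Finset.Icc 1 j)
        = ∑ u : Fin n → Bool, ∑ v : Fin n → Bool,
            if gray n u ≤ j ∧ j < gray n v ∧ cubeAdj u v then 1 else 0 := by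
    intro j
    rw [theta, Finset.card_filter, Finset.sum_product]
    refine Finset.sum_congr rfl fun u _ => Finset.sum_congr rfl fun v _ => ?_
    congr 1
    have h1 := gray_mem u
    have h2 := gray_mem v
    simp only [Finset.mem_filter, Finset.mem_univ, true_and, Finset.mem_Icc, eq_iff_iff]
    constructor
    · rintro ⟨⟨_, h⟩, hv, hadj⟩; exact ⟨h, by omega, hadj⟩
    · rintro ⟨h, hj, hadj⟩; exact ⟨⟨h1.1, h⟩, by omega, hadj⟩
  have hinner : ∀ u v : Fin n → Bool,
      (∑ j ∈ Finset.Icc 1 (2^n - 1),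
        if gray n u ≤ j ∧ j < gray n v ∧ cubeAdj u v then 1 else 0)
      = if cubeAdj u v then gray n v - gray n u else 0 := by
    intro u v
    by_cases h : cubeAdj u v
    · rw [if_pos h, ← Finset.card_filter]
      have h1 := gray_mem u; have h2 := gray_mem v
      rw [show (Finset.Icc 1 (2^n - 1)).filter
            (fun j => gray n u ≤ j ∧ j < gray n v ∧ cubeAdj u v)
          = Finset.Ico (gray n u) (gray n v) from ?_]
      · exact Nat.card_Ico _ _
      · ext j
        simp only [Finset.mem_filter, Finset.mem_Icc, Finset.mem_Ico]
        constructor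
        · rintro ⟨_, hju, hjv, _⟩; exact ⟨hju, hjv⟩
        · rintro ⟨hju, hjv⟩; exact ⟨⟨by omega, by omega⟩, hju, hjv, h⟩
    · rw [if_neg h]
      exact Finset.sum_eq_zero fun j _ => if_neg (by tauto)
  have hTW : (∑ u : Fin n → Bool, ∑ v : Fin n → Bool,
        if cubeAdj u v then Nat.dist (gray n u) (gray n v) else 0)
      = (∑ u : Fin n → Bool, ∑ v : Fin n → Bool,
          if cubeAdj u v then gray n v - gray n u else 0)
        + (∑ u : Fin n → Bool, ∑ v : Fin n → Bool,
          if cubeAdj u v then gray n u - gray n v else 0) := by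
    rw [← Finset.sum_add_distrib]
    refine Finset.sum_congr rfl fun u _ => ?_
    rw [← Finset.sum_add_distrib]
    refine Finset.sum_congr rfl fun v _ => ?_
    by_cases h : cubeAdj u v <;> simp [h, nat_dist_eq] <;> omega
  have hswap : (∑ u : Fin n → Bool, ∑ v : Fin n → Bool,
        if cubeAdj u v then gray n v - gray n u else 0)
      = ∑ u : Fin n → Bool, ∑ v : Fin n → Bool,
          if cubeAdj u v then gray n u - gray n v else 0 := by
    rw [Finset.sum_comm]
    refine Finset.sum_congr rfl fun u _ => Finset.sum_congr rfl fun v _ => ?_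
    rw [if_congr (cubeAdj_symm v u) rfl rfl]
  have hkey : ∑ j ∈ Finset.Icc 1 (2 ^ n - 1),
      theta n (Finset.univ.filter fun v => gray n v ∈ Finset.Icc 1 j)
      = ∑ u : Fin n → Bool, ∑ v : Fin n → Bool,
          if cubeAdj u v then gray n v - gray n u else 0 :=
    calc _ = ∑ j ∈ Finset.Icc 1 (2^n - 1), ∑ u : Fin n → Bool, ∑ v : Fin n → Bool,
            if gray n u ≤ j ∧ j < gray n v ∧ cubeAdj u v then 1 else 0 :=
          Finset.sum_congr rfl fun j _ => htheta j
      _ = ∑ u : Fin n → Bool, ∑ j ∈ Finset.Icc 1 (2^n - 1), ∑ v : Fin n → Bool,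
            if gray n u ≤ j ∧ j < gray n v ∧ cubeAdj u v then 1 else 0 :=
          Finset.sum_comm
      _ = ∑ u : Fin n → Bool, ∑ v : Fin n → Bool, ∑ j ∈ Finset.Icc 1 (2^n - 1),
            if gray n u ≤ j ∧ j < gray n v ∧ cubeAdj u v then 1 else 0 :=
          Finset.sum_congr rfl fun u _ => Finset.sum_comm
      _ = _ := Finset.sum_congr rfl fun u _ => Finset.sum_congr rfl fun v _ => hinner u v
  have hT := sum_dist n
  have e4 : (2:ℕ)^(2*n) = 4^n := by rw [pow_mul]; norm_num
  have e5 : (2:ℕ)^(2*n-1) * 2 = 2^(2*n) := by rw [← pow_succ]; congr 1; omega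
  have e6 : (2:ℕ)^(n-1) * 2 = 2^n := by rw [← pow_succ]; congr 1; omega
  omega
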